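/- Let f : ℝⁿ → ℝ be differentiable with L-Lipschitz gradient (‖∇f(y) − ∇f(z)‖ ≤ L‖y − z‖ for all y, z). Let x, d ∈ ℝⁿ with ‖d‖ = 1 and Δ > 0. If the sufficient-decrease condition fails in the sense that f(x) ≤ f(x + Δd) + Δ², then −⟪∇f(x), d⟫ ≤ (L + 1)·Δ. -/

import Mathlib

open InnerProductSpace

/-- If the sufficient-decrease condition fails along a unit direction d, i.e.
  f(x) ≤ f(x + Δd) + Δ², then −⟪∇f(x), d⟫ ≤ (L + 1)·Δ. -/
theorem stmt_9 (n : ℕ) (hn : 1 ≤ n)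
    (f : EuclideanSpace ℝ (Fin n) → ℝ)
    (hdiff : Differentiable ℝ f)
    (L : ℝ)
    (hLip : ∀ y z : EuclideanSpace ℝ (Fin n),
      ‖gradient f y - gradient f z‖ ≤ L * ‖y - z‖)
    (x d : EuclideanSpace ℝ (Fin n)) (hd : ‖d‖ = 1)
    (Δ : ℝ) (hΔ : 0 < Δ)
    (hfail : f x ≤ f (x + Δ • d) + Δ ^ 2) :
    -(inner ℝ (gradient f x) d : ℝ) ≤ (L + 1) * Δ := by
  set y := x + Δ • d with hy
  have hyx : y - x = Δ • d := by simp [hy]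
  have hnyx : ‖y - x‖ = Δ := by
    rw [hyx, norm_smul, hd, mul_one, Real.norm_eq_abs, abs_of_pos hΔ]
  have hfd : ∀ z : EuclideanSpace ℝ (Fin n),
      fderiv ℝ f z = toDual ℝ (EuclideanSpace ℝ (Fin n)) (gradient f z) := by
    intro z
    rw [gradient, (toDual ℝ (EuclideanSpace ℝ (Fin n))).apply_symm_apply]
  have hLipF : ∀ z ∈ segment ℝ x y, ‖fderiv ℝ f z - fderiv ℝ f x‖ ≤ L * Δ := by
    intro z hz
    rw [hfd, hfd, ← map_sub,
      (toDual ℝ (EuclideanSpace ℝ (Fin n))).norm_map]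
    refine (hLip z x).trans ?_
    have hL0 : 0 ≤ L := by
      by_contra h
      push_neg at h
      have h1 := hLip (x + d) x
      have h2 : x + d - x = d := by abel
      rw [h2, hd, mul_one] at h1
      nlinarith [norm_nonneg (gradient f (x + d) - gradient f x)]
    have hzx : ‖z - x‖ ≤ Δ := by
      obtain ⟨a, b, ha, hb, hab, rfl⟩ := hz
      have h3 : a • x + b • y - x = b • (y - x) := by
        rw [show a = 1 - b by linarith]; module
      rw [h3, norm_smul, hnyx, Real.norm_eq_abs, abs_of_nonneg hb]
      nlinarith
    exact mul_le_mul_of_nonneg_left hzx hL0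
  have key : ‖f y - f x - (fderiv ℝ f x) (y - x)‖ ≤ (L * Δ) * ‖y - x‖ :=
    (convex_segment x y).norm_image_sub_le_of_norm_fderiv_le'
      (fun z _ => hdiff z) hLipF (left_mem_segment ℝ x y) (right_mem_segment ℝ x y)
  have happ : (fderiv ℝ f x) (y - x) = Δ * (inner ℝ (gradient f x) d : ℝ) := by
    rw [hfd, hyx, toDual_apply_apply, inner_smul_right]
  rw [happ, hnyx] at key
  have habs := abs_le.mp (by rwa [Real.norm_eq_abs] at key)
  have hL0 : 0 ≤ L := by
    by_contra h
    push_neg at h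
    have h1 := hLip (x + d) x
    have h2 : x + d - x = d := by abel
    rw [h2, hd, mul_one] at h1
    nlinarith [norm_nonneg (gradient f (x + d) - gradient f x)]
  nlinarith [habs.1, habs.2]
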